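/- Let n ≥ 2, let I be a nonempty open interval containing 0 with sup I = +∞, and define 𝔐^{[n]} : Iⁿ → ℝ by 𝔐^{[n]}(x) = 0 if min(x) ≤ 0 ≤ max(x) and 𝔐^{[n]}(x) = (x₁+⋯+xₙ)/n otherwise. Then there is no strictly increasing function f : I → ℝ such that 𝔐^{[n]}(x) = A_f^{[n]}(x) for all x ∈ Iⁿ. In contrast, if I = (a,b) is bounded with a < 0 < b, then such a strictly increasing f exists. -/

import Mathlib

open Set Filter Topology

/-- `finv` is the generalized inverse of the strictly increasing function `f : I → ℝ`:
an increasing continuous left inverse of `f` mapping `conv (f '' I)` into `I`. -/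
def IsGenInv (I : Set ℝ) (f finv : ℝ → ℝ) : Prop :=
  MonotoneOn finv (convexHull ℝ (f '' I)) ∧
  ContinuousOn finv (convexHull ℝ (f '' I)) ∧
  Set.MapsTo finv (convexHull ℝ (f '' I)) I ∧
  ∀ x ∈ I, finv (f x) = x

/-- The `n`-variable generalized quasiarithmetic mean `A_f^{[n]}` generated by `f`,
where `finv` is the generalized inverse of `f`. -/
noncomputable def qam (finv f : ℝ → ℝ) (n : ℕ) (x : Fin n → ℝ) : ℝ :=
  finv ((∑ i, f (x i)) / n)

open Classical in
/-- The mean `𝔐^{[n]}`: equal to `0` if `min x ≤ 0 ≤ max x`, and to the arithmetic mean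
otherwise. -/
noncomputable def frakM (n : ℕ) (x : Fin n → ℝ) : ℝ :=
  if (∃ i, x i ≤ 0) ∧ (∃ i, 0 ≤ x i) then 0 else (∑ i, x i) / n

/-- if `I` is an open interval containing `0` that is unbounded above, then
`𝔐^{[n]}` restricted to `Iⁿ` is not a generalized quasiarithmetic mean; if `I = (a,b)` is
bounded with `a < 0 < b`, then it is. -/
lemma sum_ite_fin {n : ℕ} (j : Fin n) (c d : ℝ) :
    ∑ i, (if i = j then c else d) = c + ((n:ℝ)-1) * d := by
  have h : ∀ i : Fin n, (if i = j then c else d) = d + (if i = j then c - d else 0) := by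
    intro i; split <;> ring
  rw [Finset.sum_congr rfl (fun i _ => h i), Finset.sum_add_distrib, Finset.sum_const,
    Finset.card_univ, Fintype.card_fin, Finset.sum_ite_eq' Finset.univ j (fun _ => c - d),
    if_pos (Finset.mem_univ j), nsmul_eq_mul]
  ring

noncomputable def myf (a b : ℝ) (n : ℕ) (x : ℝ) : ℝ :=
  if x < 0 then -x/(a*n) - 1 else if x = 0 then 0 else x/(b*n) + 1

noncomputable def myfinv (a b : ℝ) (n : ℕ) (y : ℝ) : ℝ :=
  -(a*n)*(min y (-1) + 1) + b*n*(max y 1 - 1)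

lemma myf_neg {a b : ℝ} {n : ℕ} {x : ℝ} (hx : x < 0) : myf a b n x = -x/(a*n) - 1 := by
  rw [myf, if_pos hx]

lemma myf_zero (a b : ℝ) (n : ℕ) : myf a b n 0 = 0 := by
  rw [myf, if_neg (lt_irrefl 0), if_pos rfl]

lemma myf_pos {a b : ℝ} {n : ℕ} {x : ℝ} (hx : 0 < x) : myf a b n x = x/(b*n) + 1 := by
  rw [myf, if_neg (not_lt.mpr hx.le), if_neg hx.ne']

section
variable {a b : ℝ} {n : ℕ} (ha : a < 0) (hb : 0 < b) (hn : 1 ≤ n)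

include ha hb hn in
lemma myf_mono : StrictMono (myf a b n) := by
  have hn1 : (1:ℝ) ≤ n := by exact_mod_cast hn
  have han : a * n < 0 := mul_neg_of_neg_of_pos ha (by linarith)
  have hbn : 0 < b * n := mul_pos hb (by linarith)
  intro x y hxy
  rcases lt_trichotomy x 0 with hx|hx|hx <;> rcases lt_trichotomy y 0 with hy|hy|hy <;>
    try linarith
  · rw [myf_neg hx, myf_neg hy]
    have := div_lt_div_of_neg_of_lt han (by linarith : -y < -x)
    linarith
  · subst hy
    rw [myf_neg hx, myf_zero]
    have : -x/(a*n) < 0 := div_neg_of_pos_of_neg (by linarith) han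
    linarith
  · rw [myf_neg hx, myf_pos hy]
    have h1 : -x/(a*n) < 0 := div_neg_of_pos_of_neg (by linarith) han
    have h2 : 0 < y/(b*n) := div_pos hy hbn
    linarith
  · subst hx
    rw [myf_zero, myf_pos hy]
    have h2 : 0 < y/(b*n) := div_pos hy hbn
    linarith
  · rw [myf_pos hx, myf_pos hy]
    have := (div_lt_div_iff_of_pos_right hbn).mpr hxy
    linarith

include ha hb hn in
lemma myf_leftinv {x : ℝ} (hx : x ∈ Ioo a b) : myfinv a b n (myf a b n x) = x := by
  have hn1 : (1:ℝ) ≤ n := by exact_mod_cast hn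
  have han : a * n < 0 := mul_neg_of_neg_of_pos ha (by linarith)
  have hbn : 0 < b * n := mul_pos hb (by linarith)
  rcases lt_trichotomy x 0 with h|h|h
  · rw [myf_neg h, myfinv]
    have h1 : -x/(a*n) < 0 := div_neg_of_pos_of_neg (by linarith) han
    rw [min_eq_left (by linarith), max_eq_right (by linarith)]
    field_simp [han.ne]
    have hax : a * (x / a) = x := by field_simp [ha.ne]
    linear_combination hax
  · subst h
    rw [myf_zero, myfinv, min_eq_right (by norm_num), max_eq_right (by norm_num)]
    ring
  · rw [myf_pos h, myfinv]
    have h1 : 0 < x/(b*n) := div_pos h hbn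
    rw [min_eq_right (by linarith), max_eq_left (by linarith)]
    field_simp
    ring

include ha hb hn in
lemma myfinv_mono : Monotone (myfinv a b n) := by
  have hn1 : (1:ℝ) ≤ n := by exact_mod_cast hn
  have han : (0:ℝ) ≤ -(a*n) := by nlinarith
  have hbn : (0:ℝ) ≤ b*n := by nlinarith
  intro y z hyz
  unfold myfinv
  have h1 : min y (-1) ≤ min z (-1) := min_le_min hyz le_rfl
  have h2 : max y 1 ≤ max z 1 := max_le_max hyz le_rfl
  nlinarith

lemma myfinv_cont (a b : ℝ) (n : ℕ) : Continuous (myfinv a b n) := by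
  unfold myfinv
  exact (continuous_const.mul ((continuous_id.min continuous_const).add continuous_const)).add
    (continuous_const.mul ((continuous_id.max continuous_const).sub continuous_const))

include ha hb hn in
lemma myf_bounds {x : ℝ} (hx : x ∈ Ioo a b) :
    myf a b n x ∈ Ioo (-(((n:ℝ)+1)/n)) (((n:ℝ)+1)/n) := by
  have hn1 : (1:ℝ) ≤ n := by exact_mod_cast hn
  have hn0 : (0:ℝ) < n := by linarith
  have han : a * n < 0 := mul_neg_of_neg_of_pos ha hn0
  have hbn : 0 < b * n := mul_pos hb hn0
  have hq : (0:ℝ) < ((n:ℝ)+1)/n := by positivity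
  obtain ⟨hxa, hxb⟩ := hx
  rcases lt_trichotomy x 0 with h|h|h
  · rw [myf_neg h]
    have h1 : -x/(a*n) < 0 := div_neg_of_pos_of_neg (by linarith) han
    have h2 : -a/(a*n) < -x/(a*n) := div_lt_div_of_neg_of_lt han (by linarith)
    have h3 : -a/(a*n) = (-1)/n := by
      rw [div_eq_div_iff han.ne hn0.ne']; ring
    rw [h3] at h2
    constructor
    · have h4 : -(((n:ℝ)+1)/n) = (-1)/n - 1 := by field_simp; ring
      rw [h4]; linarith
    · linarith
  · subst h; rw [myf_zero]
    exact ⟨by linarith, hq⟩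
  · rw [myf_pos h]
    have h1 : 0 < x/(b*n) := div_pos h hbn
    have h2 : x/(b*n) < b/(b*n) := (div_lt_div_iff_of_pos_right hbn).mpr hxb
    have h3 : b/(b*n) = 1/n := by
      rw [div_eq_div_iff hbn.ne' (by positivity)]; ring
    rw [h3] at h2
    constructor
    · linarith
    · have h4 : (((n:ℝ)+1)/n) = 1/n + 1 := by field_simp; ring
      rw [h4]; linarith

include ha hn in
lemma myf_nonpos {x : ℝ} (hx : x ≤ 0) : myf a b n x ≤ 0 := by
  have hn1 : (1:ℝ) ≤ n := by exact_mod_cast hn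
  have han : a * n < 0 := mul_neg_of_neg_of_pos ha (by linarith)
  rcases lt_or_eq_of_le hx with h|h
  · rw [myf_neg h]
    have : -x/(a*n) < 0 := div_neg_of_pos_of_neg (by linarith) han
    linarith
  · rw [h, myf_zero]

include hb hn in
lemma myf_nonneg {x : ℝ} (hx : 0 ≤ x) : 0 ≤ myf a b n x := by
  have hn1 : (1:ℝ) ≤ n := by exact_mod_cast hn
  have hbn : 0 < b * n := mul_pos hb (by linarith)
  rcases lt_or_eq_of_le hx with h|h
  · rw [myf_pos h]
    have : 0 < x/(b*n) := div_pos h hbn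
    linarith
  · rw [← h, myf_zero]

include ha hb hn in
lemma myfinv_maps {y : ℝ} (hy : y ∈ Ioo (-(((n:ℝ)+1)/n)) (((n:ℝ)+1)/n)) :
    myfinv a b n y ∈ Ioo a b := by
  have hn1 : (1:ℝ) ≤ n := by exact_mod_cast hn
  have hn0 : (0:ℝ) < n := by linarith
  have han : (0:ℝ) < -(a*n) := by nlinarith
  have hbn : (0:ℝ) < b*n := mul_pos hb hn0
  obtain ⟨hy1, hy2⟩ := hy
  have e1 : -(((n:ℝ)+1)/n) = (-1)/n - 1 := by field_simp; ring
  have e2 : (((n:ℝ)+1)/n) = 1/n + 1 := by field_simp; ring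
  rw [e1] at hy1; rw [e2] at hy2
  have hm1a : (-1)/n - 1 < min y (-1) := lt_min hy1 (by
    have : (0:ℝ) < 1/n := by positivity
    have : (-1:ℝ)/n = -(1/n) := by ring
    linarith)
  have hm1b : min y (-1) ≤ -1 := min_le_right _ _
  have hm2a : 1 ≤ max y 1 := le_max_right _ _
  have hm2b : max y 1 < 1/n + 1 := max_lt hy2 (by
    have : (0:ℝ) < 1/n := by positivity
    linarith)
  set m1 := min y (-1)
  set m2 := max y 1
  have ht1a : -(a*n) * (m1 + 1) ≤ 0 := mul_nonpos_of_nonneg_of_nonpos han.le (by linarith)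
  have ht1b : a < -(a*n) * (m1 + 1) := by
    have h5 : -(a*n) * ((-1)/n) < -(a*n) * (m1 + 1) :=
      mul_lt_mul_of_pos_left (by linarith) han
    have h6 : -(a*n) * ((-1)/n) = a := by field_simp
    linarith
  have ht2a : 0 ≤ b*n * (m2 - 1) := mul_nonneg hbn.le (by linarith)
  have ht2b : b*n * (m2 - 1) < b := by
    have h5 : b*n * (m2 - 1) < b*n * (1/n) := mul_lt_mul_of_pos_left (by linarith) hbn
    have h6 : b*n * (1/n) = b := by field_simp
    linarith
  rw [myfinv]
  constructor <;> linarith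

include ha hb hn in
lemma main_eq (x : Fin n → ℝ) (hx : ∀ i, x i ∈ Ioo a b) :
    frakM n x = qam (myfinv a b n) (myf a b n) n x := by
  rw [frakM, qam]
  haveI : Nonempty (Fin n) := ⟨⟨0, by omega⟩⟩
  have hn1 : (1:ℝ) ≤ n := by exact_mod_cast hn
  have hn0 : (0:ℝ) < n := by linarith
  have han : a * n < 0 := mul_neg_of_neg_of_pos ha hn0
  have hbn : 0 < b * n := mul_pos hb hn0
  have hcast : ((n - 1 : ℕ) : ℝ) = (n:ℝ) - 1 := by
    push_cast [Nat.cast_sub hn]; ring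
  by_cases h1 : ∃ i, x i ≤ 0
  · by_cases h2 : ∃ i, 0 ≤ x i
    · rw [if_pos ⟨h1, h2⟩]
      obtain ⟨j, hj⟩ := h1
      obtain ⟨k, hk⟩ := h2
      set S := ∑ i, myf a b n (x i) with hS
      have hub : ∀ i, myf a b n (x i) ≤ ((n:ℝ)+1)/n := by
        intro i
        rcases lt_trichotomy (x i) 0 with h|h|h
        · have hle : myf a b n (x i) ≤ 0 := myf_nonpos ha hn h.le
          have hq : (0:ℝ) < ((n:ℝ)+1)/n := by positivity
          linarith
        · rw [h, myf_zero]; positivity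
        · rw [myf_pos h]
          have h2' : x i/(b*n) < b/(b*n) := (div_lt_div_iff_of_pos_right hbn).mpr (hx i).2
          have h3 : b/(b*n) = 1/n := by
            rw [div_eq_div_iff hbn.ne' hn0.ne']; ring
          have h4 : (((n:ℝ)+1)/n) = 1/n + 1 := by field_simp; ring
          rw [h4]; rw [h3] at h2'; linarith
      have hlb : ∀ i, -(((n:ℝ)+1)/n) ≤ myf a b n (x i) := by
        intro i
        rcases lt_trichotomy (x i) 0 with h|h|h
        · rw [myf_neg h]
          have h2' : -a/(a*n) < -(x i)/(a*n) := div_lt_div_of_neg_of_lt han (by linarith [(hx i).1])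
          have h3 : -a/(a*n) = (-1)/n := by
            rw [div_eq_div_iff han.ne hn0.ne']; ring
          have h4 : -(((n:ℝ)+1)/n) = (-1)/n - 1 := by field_simp; ring
          rw [h4]; rw [h3] at h2'; linarith
        · rw [h, myf_zero]
          have : (0:ℝ) < ((n:ℝ)+1)/n := by positivity
          linarith
        · have hge : 0 ≤ myf a b n (x i) := myf_nonneg hb hn h.le
          have hq : (0:ℝ) < ((n:ℝ)+1)/n := by positivity
          linarith
      have hjle : myf a b n (x j) ≤ 0 := myf_nonpos ha hn hj
      have hkge : 0 ≤ myf a b n (x k) := myf_nonneg hb hn hk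
      -- upper bound on S
      have hSub : S ≤ (n:ℝ) := by
        have herase := Finset.sum_erase_add Finset.univ (fun i => myf a b n (x i)) (Finset.mem_univ j)
        have hb1 : ∑ i ∈ Finset.univ.erase j, myf a b n (x i)
            ≤ (Finset.univ.erase j).card • (((n:ℝ)+1)/n) :=
          Finset.sum_le_card_nsmul _ _ _ (fun i _ => hub i)
        have hcard : (Finset.univ.erase j).card = n - 1 := by
          simp [Finset.card_erase_of_mem]
        rw [hcard, nsmul_eq_mul, hcast] at hb1
        have hfin : ((n:ℝ)-1) * (((n:ℝ)+1)/n) ≤ n := by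
          rw [← mul_div_assoc, div_le_iff₀ hn0]
          nlinarith
        calc S = (∑ i ∈ Finset.univ.erase j, myf a b n (x i)) + myf a b n (x j) := herase.symm
          _ ≤ ((n:ℝ)-1) * (((n:ℝ)+1)/n) + 0 := by linarith
          _ ≤ n := by linarith
      have hSlb : -(n:ℝ) ≤ S := by
        have herase := Finset.sum_erase_add Finset.univ (fun i => myf a b n (x i)) (Finset.mem_univ k)
        have hb1 : (Finset.univ.erase k).card • (-(((n:ℝ)+1)/n))
            ≤ ∑ i ∈ Finset.univ.erase k, myf a b n (x i) :=
          Finset.card_nsmul_le_sum _ _ _ (fun i _ => hlb i)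
        have hcard : (Finset.univ.erase k).card = n - 1 := by
          simp [Finset.card_erase_of_mem]
        rw [hcard, nsmul_eq_mul, hcast] at hb1
        have hfin : -(n:ℝ) ≤ ((n:ℝ)-1) * (-(((n:ℝ)+1)/n)) := by
          have e : ((n:ℝ)-1) * (-(((n:ℝ)+1)/n)) = -((((n:ℝ)-1)*((n:ℝ)+1))/n) := by ring
          rw [e, neg_le_neg_iff, div_le_iff₀ hn0]
          nlinarith
        calc -(n:ℝ) ≤ ((n:ℝ)-1) * (-(((n:ℝ)+1)/n)) + 0 := by linarith
          _ ≤ (∑ i ∈ Finset.univ.erase k, myf a b n (x i)) + myf a b n (x k) := by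
              linarith
          _ = S := herase
      have hd1 : -1 ≤ S / n := by
        rw [le_div_iff₀ hn0]; linarith
      have hd2 : S / n ≤ 1 := by
        rw [div_le_iff₀ hn0]; linarith
      rw [myfinv, min_eq_right hd1, max_eq_right hd2]
      ring
    · -- all negative
      push_neg at h2
      rw [if_neg (fun hc => absurd hc.2 (by push_neg; exact h2))]
      have hsum : ∑ i, myf a b n (x i) = -(∑ i, x i)/(a*n) - n := by
        rw [Finset.sum_congr rfl (fun i _ => myf_neg (h2 i))]
        rw [Finset.sum_sub_distrib, Finset.sum_const, Finset.card_univ, Fintype.card_fin,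
          nsmul_eq_mul, mul_one, ← Finset.sum_div, ← Finset.sum_neg_distrib]
      set S' := ∑ i, x i with hS'
      have hS'neg : S' < 0 := Finset.sum_neg (fun i _ => h2 i) Finset.univ_nonempty
      have hm : (∑ i, myf a b n (x i))/n = -S'/(a*n*n) - 1 := by
        rw [hsum, sub_div, div_div, div_self hn0.ne']
      have hmlt : -S'/(a*(n:ℝ)*n) < 0 := div_neg_of_pos_of_neg (by linarith) (by nlinarith)
      rw [hm, myfinv, min_eq_left (by linarith), max_eq_right (by linarith)]
      field_simp [ha.ne, hn0.ne']
      ring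
  · push_neg at h1
    rw [if_neg (fun hc => absurd hc.1 (by push_neg; exact h1))]
    have hsum : ∑ i, myf a b n (x i) = (∑ i, x i)/(b*n) + n := by
      rw [Finset.sum_congr rfl (fun i _ => myf_pos (h1 i))]
      rw [Finset.sum_add_distrib, Finset.sum_const, Finset.card_univ, Fintype.card_fin,
        nsmul_eq_mul, mul_one, ← Finset.sum_div]
    set S' := ∑ i, x i with hS'
    have hS'pos : 0 < S' := Finset.sum_pos (fun i _ => h1 i) Finset.univ_nonempty
    have hm : (∑ i, myf a b n (x i))/n = S'/(b*n*n) + 1 := by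
      rw [hsum, add_div, div_div, div_self hn0.ne']
    have hmgt : 0 < S'/(b*(n:ℝ)*n) := div_pos hS'pos (by positivity)
    rw [hm, myfinv, min_eq_right (by linarith), max_eq_left (by linarith)]
    field_simp [hb.ne', hn0.ne']
    ring
end

theorem stmt19 (n : ℕ) (hn : 2 ≤ n) :
    (∀ I : Set ℝ, IsOpen I → I.OrdConnected → 0 ∈ I → ¬ BddAbove I →
      ¬ ∃ f finv : ℝ → ℝ, StrictMonoOn f I ∧ IsGenInv I f finv ∧
        ∀ x : Fin n → ℝ, (∀ i, x i ∈ I) → frakM n x = qam finv f n x) ∧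
    (∀ a b : ℝ, a < 0 → 0 < b →
      ∃ f finv : ℝ → ℝ, StrictMonoOn f (Ioo a b) ∧ IsGenInv (Ioo a b) f finv ∧
        ∀ x : Fin n → ℝ, (∀ i, x i ∈ Ioo a b) → frakM n x = qam finv f n x) := by
  constructor
  · rintro I hIo hIc h0I hIb ⟨f, finv, hf, ⟨hm, hc, hmaps, hleft⟩, heq⟩
    have hn2 : (2:ℝ) ≤ n := by exact_mod_cast hn
    have hn0 : (0:ℝ) < n := by linarith
    set i0 : Fin n := ⟨0, by omega⟩ with hi0
    set i1 : Fin n := ⟨1, by omega⟩ with hi1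
    have hi10 : i1 ≠ i0 := Fin.ne_of_val_ne (by norm_num)
    have hsub : ∀ t : ℝ, 0 ≤ t → t ∈ I := by
      intro t ht
      obtain ⟨u, huI, hu⟩ := not_bddAbove_iff.mp hIb t
      exact hIc.out h0I huI ⟨ht, hu.le⟩
    have h1I : (1:ℝ) ∈ I := hsub 1 (by norm_num)
    have h2I : (2:ℝ) ∈ I := hsub 2 (by norm_num)
    have hullmem : ∀ {u : ℝ}, u ∈ I → f u ∈ convexHull ℝ (f '' I) :=
      fun hu => subset_convexHull ℝ _ ⟨_, hu, rfl⟩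
    have hconn := (convex_convexHull ℝ (f '' I)).ordConnected
    -- key0: the mean with one coordinate t and the rest 0 maps to 0
    have key0 : ∀ t ∈ I, 0 ≤ t → finv ((f t + ((n:ℝ)-1) * f 0)/n) = 0 := by
      intro t htI ht
      have hx := heq (fun i => if i = i0 then t else 0)
        (fun i => by split <;> [exact htI; exact h0I])
      rw [frakM, if_pos ⟨⟨i1, by simp [hi10]⟩, ⟨i1, by simp [hi10]⟩⟩, qam] at hx
      have hcong : ∀ i : Fin n, f (if i = i0 then t else 0) = (if i = i0 then f t else f 0) := by
        intro i; split <;> rfl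
      rw [Finset.sum_congr rfl (fun i _ => hcong i), sum_ite_fin] at hx
      exact hx.symm
    -- f is bounded above on the positive part
    have hC : ∀ t ∈ I, 0 < t → f t < (n:ℝ) * f 1 - ((n:ℝ)-1) * f 0 := by
      intro t htI ht
      by_contra hcon; push_neg at hcon
      have hf0t : f 0 ≤ f t := (hf h0I htI ht).le
      set μ := (f t + ((n:ℝ)-1) * f 0)/n with hμ
      have hμ1 : f 1 ≤ μ := by rw [hμ, le_div_iff₀ hn0]; linarith
      have hμlo : f 0 ≤ μ := by rw [hμ, le_div_iff₀ hn0]; nlinarith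
      have hμhi : μ ≤ f t := by
        rw [hμ, div_le_iff₀ hn0]
        nlinarith [mul_le_mul_of_nonneg_left hf0t (by linarith : (0:ℝ) ≤ (n:ℝ)-1)]
      have hμmem : μ ∈ convexHull ℝ (f '' I) := hconn.out (hullmem h0I) (hullmem htI) ⟨hμlo, hμhi⟩
      have hle := hm (hullmem h1I) hμmem hμ1
      rw [hleft 1 h1I, key0 t htI ht.le] at hle
      linarith
    have hBdd : BddAbove (f '' I) := by
      refine ⟨max (f 1) ((n:ℝ) * f 1 - ((n:ℝ)-1) * f 0), ?_⟩
      rintro y ⟨t, htI, rfl⟩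
      rcases le_or_gt t 1 with h|h
      · exact le_max_of_le_left (hf.monotoneOn htI h1I h)
      · exact le_max_of_le_right (hC t htI (by linarith)).le
    set L := sSup (f '' I) with hL
    have hne : (f '' I).Nonempty := ⟨f 0, 0, h0I, rfl⟩
    have hLle : ∀ t ∈ I, f t ≤ L := fun t ht => le_csSup hBdd ⟨t, ht, rfl⟩
    have hf1L : f 1 < L := lt_of_lt_of_le (hf h1I h2I one_lt_two) (hLle 2 h2I)
    have hthr : (((n:ℝ)-1) * L + f 1)/n < L := by
      rw [div_lt_iff₀ hn0]; nlinarith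
    obtain ⟨y, hyI, hy⟩ := exists_lt_of_lt_csSup hne hthr
    obtain ⟨t', ht'I, rfl⟩ := hyI
    have h1t' : 1 < t' := by
      by_contra h; push_neg at h
      have h1 : f t' ≤ f 1 := hf.monotoneOn ht'I h1I h
      have h2 : f 1 ≤ (((n:ℝ)-1) * L + f 1)/n := by
        rw [le_div_iff₀ hn0]; nlinarith
      linarith
    set T := (n:ℝ) * t' with hTdef
    have hT1 : 1 < T := by nlinarith
    have hTI : T ∈ I := hsub T (by linarith)
    have hposx : ∀ i : Fin n, (0:ℝ) < (if i = i0 then (1:ℝ) else T) := by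
      intro i; split
      · norm_num
      · linarith
    have hx := heq (fun i => if i = i0 then (1:ℝ) else T)
      (fun i => by split <;> [exact h1I; exact hTI])
    rw [frakM, if_neg (fun hcon => by
        obtain ⟨i, hi⟩ := hcon.1
        exact absurd hi (not_le.mpr (hposx i))), qam] at hx
    have hcong : ∀ i : Fin n, f (if i = i0 then (1:ℝ) else T) = (if i = i0 then f 1 else f T) := by
      intro i; split <;> rfl
    rw [Finset.sum_congr rfl (fun i _ => hcong i), sum_ite_fin, sum_ite_fin] at hx
    set ν := (f 1 + ((n:ℝ)-1) * f T)/n with hν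
    have hf1T : f 1 < f T := hf h1I hTI hT1
    have hνlo : f 1 ≤ ν := by
      rw [hν, le_div_iff₀ hn0]
      nlinarith [mul_le_mul_of_nonneg_left hf1T.le (by linarith : (0:ℝ) ≤ (n:ℝ)-1)]
    have hνhi : ν ≤ f T := by rw [hν, div_le_iff₀ hn0]; nlinarith
    have hνmem : ν ∈ convexHull ℝ (f '' I) := hconn.out (hullmem h1I) (hullmem hTI) ⟨hνlo, hνhi⟩
    have hνle : ν ≤ f t' := by
      have hfTL : f T ≤ L := hLle T hTI
      have : ν ≤ (((n:ℝ)-1) * L + f 1)/n := by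
        rw [hν, div_le_div_iff₀ hn0 hn0]
        nlinarith [mul_le_mul_of_nonneg_left hfTL (by linarith : (0:ℝ) ≤ (n:ℝ)-1)]
      linarith
    have hfin := hm hνmem (hullmem ht'I) hνle
    rw [hleft t' ht'I, ← hx] at hfin
    rw [div_le_iff₀ hn0] at hfin
    rw [hTdef] at hfin
    nlinarith [hfin, mul_nonneg (by linarith : (0:ℝ) ≤ (n:ℝ)-2)
      (by nlinarith : (0:ℝ) ≤ (n:ℝ) * t')]
  · intro a b ha hb
    have hn1 : 1 ≤ n := by omega
    refine ⟨myf a b n, myfinv a b n, (myf_mono ha hb hn1).strictMonoOn _,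
      ⟨(myfinv_mono ha hb hn1).monotoneOn _, (myfinv_cont a b n).continuousOn, ?_,
        fun x hx => myf_leftinv ha hb hn1 hx⟩, fun x hx => main_eq ha hb hn1 x hx⟩
    intro y hy
    refine myfinv_maps ha hb hn1 (convexHull_min ?_ (convex_Ioo _ _) hy)
    rintro z ⟨x, hx, rfl⟩
    exact myf_bounds ha hb hn1 hx
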